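/- Let q ∈ K be nonzero and not a root of unity, d ≥ 1, θ_i = q^{2i−d} and θ*_i = q^{d−2i} for 0 ≤ i ≤ d. For 0 ≤ i ≤ d, with η_{d−i}(θ₀) = ∏_{j=i+1}^{d}(θ₀ − θ_j) and η*_{d−i}(θ*₀) = ∏_{j=i+1}^{d}(θ*₀ − θ*_j), one has η_{d−i}(θ₀)·η*_{d−i}(θ*₀) = (−1)^{d−i} ([d]_q! / [i]_q!)² (q − q^{−1})^{2d−2i}, where [n]_q = (q^n − q^{−n})/(q − q^{−1}) and [m]_q! = ∏_{n=1}^{m}[n]_q. -/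

import Mathlib

open Finset

section
variable {K : Type*} [Field K] (q : K)

lemma key_factor (hq : q ≠ 0) (d j : ℕ) :
    (q ^ (-(d : ℤ)) - q ^ (2 * (j : ℤ) - d)) * (q ^ (d : ℤ) - q ^ ((d : ℤ) - 2 * j)) =
      -(q ^ j - (q ^ j)⁻¹) ^ 2 := by
  have h1 : q ^ (-(d : ℤ)) = (q ^ d)⁻¹ := by rw [zpow_neg, zpow_natCast]
  have h2 : q ^ (2 * (j : ℤ) - d) = q ^ (2 * j) / q ^ d := by
    rw [zpow_sub₀ hq]
    norm_cast
  have h3 : q ^ ((d : ℤ) - 2 * j) = q ^ d / q ^ (2 * j) := by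
    rw [zpow_sub₀ hq]
    norm_cast
  rw [h1, h2, h3, zpow_natCast]
  have hd0 : q ^ d ≠ 0 := pow_ne_zero _ hq
  have hj0 : q ^ j ≠ 0 := pow_ne_zero _ hq
  field_simp
  ring

lemma term_eq (hq : q ≠ 0) (n : ℕ) :
    q ^ ((n : ℤ) + 1) - q ^ (-(n : ℤ) - 1) = q ^ (n + 1) - (q ^ (n + 1))⁻¹ := by
  have h1 : q ^ ((n : ℤ) + 1) = q ^ (n + 1) := by
    rw [← zpow_natCast]; norm_cast
  have h2 : q ^ (-(n : ℤ) - 1) = (q ^ (n + 1))⁻¹ := by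
    rw [← zpow_natCast, ← zpow_neg]
    congr 1
    push_cast
    ring
  rw [h1, h2]

end

theorem stmt7 {K : Type*} [Field K] (q : K) (hq : q ≠ 0)
    (hroot : ∀ n : ℕ, 0 < n → q ^ n ≠ 1)
    (d i : ℕ) (hd : 1 ≤ d) (hi : i ≤ d) :
    (∏ j ∈ Finset.Icc (i + 1) d, (q ^ (-(d : ℤ)) - q ^ (2 * (j : ℤ) - d))) *
      (∏ j ∈ Finset.Icc (i + 1) d, (q ^ (d : ℤ) - q ^ ((d : ℤ) - 2 * j))) =
    (-1) ^ (d - i) *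
      ((∏ n ∈ Finset.range d, ((q ^ ((n : ℤ) + 1) - q ^ (-(n : ℤ) - 1)) / (q - q⁻¹))) /
       (∏ n ∈ Finset.range i, ((q ^ ((n : ℤ) + 1) - q ^ (-(n : ℤ) - 1)) / (q - q⁻¹)))) ^ 2 *
      (q - q⁻¹) ^ (2 * d - 2 * i) := by
  set A : ℕ → K := fun n => q ^ n - (q ^ n)⁻¹ with hA
  have hAne : ∀ n : ℕ, 0 < n → A n ≠ 0 := by
    intro n hn h
    have hqn : q ^ n ≠ 0 := pow_ne_zero _ hq
    have : q ^ n * q ^ n = 1 := by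
      have h' : q ^ n - (q ^ n)⁻¹ = 0 := h
      rw [← inv_mul_cancel₀ hqn]
      linear_combination (q ^ n) * h'
    have h2n : q ^ (2 * n) = 1 := by rw [two_mul, pow_add]; exact this
    exact hroot (2 * n) (by omega) h2n
  have hc : q - q⁻¹ ≠ 0 := by
    have := hAne 1 one_pos
    simpa [hA] using this
  -- LHS
  have hL : (∏ j ∈ Finset.Icc (i + 1) d, (q ^ (-(d : ℤ)) - q ^ (2 * (j : ℤ) - d))) *
      (∏ j ∈ Finset.Icc (i + 1) d, (q ^ (d : ℤ) - q ^ ((d : ℤ) - 2 * j))) =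
      (-1) ^ (d - i) * ∏ j ∈ Finset.Icc (i + 1) d, (A j) ^ 2 := by
    rw [← Finset.prod_mul_distrib]
    have : ∀ j ∈ Finset.Icc (i + 1) d,
        (q ^ (-(d : ℤ)) - q ^ (2 * (j : ℤ) - d)) * (q ^ (d : ℤ) - q ^ ((d : ℤ) - 2 * j)) =
        (-1) * (A j) ^ 2 := by
      intro j _
      rw [key_factor q hq d j, hA]; ring
    rw [Finset.prod_congr rfl this, Finset.prod_mul_distrib, Finset.prod_const,
      Nat.card_Icc]
    congr 2
    omega
  rw [hL]
  -- RHS products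
  have hterm : ∀ n : ℕ, (q ^ ((n : ℤ) + 1) - q ^ (-(n : ℤ) - 1)) / (q - q⁻¹)
      = A (n + 1) / (q - q⁻¹) := by
    intro n; rw [term_eq q hq n]
  have hprod : ∀ m : ℕ, (∏ n ∈ Finset.range m, ((q ^ ((n : ℤ) + 1) - q ^ (-(n : ℤ) - 1)) / (q - q⁻¹)))
      = (∏ n ∈ Finset.range m, A (n + 1)) / (q - q⁻¹) ^ m := by
    intro m
    rw [Finset.prod_congr rfl (fun n _ => hterm n), Finset.prod_div_distrib, Finset.prod_const,
      Finset.card_range]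
  rw [hprod, hprod]
  -- split range d product
  have hsplit : (∏ n ∈ Finset.range d, A (n + 1)) =
      (∏ n ∈ Finset.range i, A (n + 1)) * ∏ n ∈ Finset.Ico i d, A (n + 1) :=
    (Finset.prod_range_mul_prod_Ico _ hi).symm
  have hPine : (∏ n ∈ Finset.range i, A (n + 1)) ≠ 0 :=
    Finset.prod_ne_zero_iff.mpr (fun n _ => hAne (n + 1) (Nat.succ_pos n))
  have hIcoeq : (∏ j ∈ Finset.Icc (i + 1) d, (A j) ^ 2) =
      (∏ n ∈ Finset.Ico i d, A (n + 1)) ^ 2 := by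
    rw [← Finset.prod_pow]
    have : Finset.Icc (i + 1) d = Finset.Ico (i + 1) (d + 1) := by
      rw [Finset.Ico_add_one_right_eq_Icc]
    rw [this, Finset.prod_Ico_eq_prod_range, Finset.prod_Ico_eq_prod_range]
    have hcard : d + 1 - (i + 1) = d - i := by omega
    rw [hcard]
    refine Finset.prod_congr rfl (fun n _ => ?_)
    have : i + 1 + n = i + n + 1 := by omega
    rw [this]
  rw [hIcoeq, hsplit]
  have h2 : 2 * d - 2 * i = (d - i) * 2 := by omega
  have hcd : (q - q⁻¹) ^ d = (q - q⁻¹) ^ i * (q - q⁻¹) ^ (d - i) := by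
    rw [← pow_add]; congr 1; omega
  rw [h2, hcd]
  have hq1 : ((∏ n ∈ Finset.range i, A (n + 1)) * ∏ n ∈ Finset.Ico i d, A (n + 1)) /
      ((q - q⁻¹) ^ i * (q - q⁻¹) ^ (d - i)) /
      ((∏ n ∈ Finset.range i, A (n + 1)) / (q - q⁻¹) ^ i) =
      (∏ n ∈ Finset.Ico i d, A (n + 1)) / (q - q⁻¹) ^ (d - i) := by
    rw [div_div_div_eq, div_eq_div_iff
      (mul_ne_zero (mul_ne_zero (pow_ne_zero _ hc) (pow_ne_zero _ hc)) hPine)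
      (pow_ne_zero _ hc)]
    ring
  rw [hq1, pow_mul, div_pow, mul_assoc, div_mul_cancel₀]
  exact pow_ne_zero _ (pow_ne_zero _ hc)
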